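/- Define a topology 𝒯 on the additive group of real numbers ℝ by taking as a basis all cosets of subgroups of ℝ of countable index. Then 𝒯 is a Hausdorff group topology on (ℝ, +) in which every countable-index subgroup is open, but the identity map from (ℝ, 𝒯) to ℝ with its standard topology is not continuous. -/

import Mathlib

open Topology

/-- The topology on `(ℝ, +)` generated by the cosets of all subgroups of
countable index. -/
def cosetTopology : TopologicalSpace ℝ :=
  TopologicalSpace.generateFrom
    {V : Set ℝ | ∃ (G : AddSubgroup ℝ) (x : ℝ),
      Countable (ℝ ⧸ G) ∧ V = {y : ℝ | y - x ∈ G}}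

/-- The generating family of cosets. -/
def cosetBasis : Set (Set ℝ) :=
  {V : Set ℝ | ∃ (G : AddSubgroup ℝ) (x : ℝ),
    Countable (ℝ ⧸ G) ∧ V = {y : ℝ | y - x ∈ G}}

lemma countable_quot_inf (G H : AddSubgroup ℝ) (hG : Countable (ℝ ⧸ G))
    (hH : Countable (ℝ ⧸ H)) : Countable (ℝ ⧸ (G ⊓ H)) := by
  have hinj : Function.Injective (fun q : ℝ ⧸ (G ⊓ H) =>
      ((QuotientAddGroup.map (G ⊓ H) G (AddMonoidHom.id ℝ) (fun x hx => hx.1) q),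
       (QuotientAddGroup.map (G ⊓ H) H (AddMonoidHom.id ℝ) (fun x hx => hx.2) q))) := by
    intro q₁ q₂ h
    obtain ⟨a, rfl⟩ := QuotientAddGroup.mk_surjective q₁
    obtain ⟨b, rfl⟩ := QuotientAddGroup.mk_surjective q₂
    simp only [QuotientAddGroup.map_mk, AddMonoidHom.id_apply, Prod.mk.injEq] at h
    have h1 : -a + b ∈ G := (QuotientAddGroup.eq (s := G)).1 h.1
    have h2 : -a + b ∈ H := (QuotientAddGroup.eq (s := H)).1 h.2
    exact (QuotientAddGroup.eq (s := G ⊓ H)).2 ⟨h1, h2⟩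
  exact hinj.countable

lemma cosetBasis_isBasis :
    @TopologicalSpace.IsTopologicalBasis ℝ cosetTopology cosetBasis := by
  refine @TopologicalSpace.IsTopologicalBasis.mk ℝ cosetTopology cosetBasis ?_ ?_ rfl
  · rintro t₁ ⟨G₁, x₁, hG₁, rfl⟩ t₂ ⟨G₂, x₂, hG₂, rfl⟩ x ⟨hx₁, hx₂⟩
    refine ⟨{y | y - x ∈ G₁ ⊓ G₂}, ⟨G₁ ⊓ G₂, x, countable_quot_inf _ _ hG₁ hG₂, rfl⟩,
      by simp only [Set.mem_setOf_eq, sub_self]; exact zero_mem _, ?_⟩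
    rintro y ⟨hy₁, hy₂⟩
    constructor
    · have : y - x₁ = (y - x) + (x - x₁) := by ring
      rw [Set.mem_setOf_eq, this]; exact add_mem hy₁ hx₁
    · have : y - x₂ = (y - x) + (x - x₂) := by ring
      rw [Set.mem_setOf_eq, this]; exact add_mem hy₂ hx₂
  · refine Set.eq_univ_of_univ_subset fun x _ => ?_
    have hcnt : Countable (ℝ ⧸ (⊤ : AddSubgroup ℝ)) :=
      @Subsingleton.to_countable _ QuotientAddGroup.subsingleton_quotient_top
    exact ⟨Set.univ, ⟨⊤, 0, hcnt, by ext y; simp⟩, trivial⟩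

lemma coset_isOpen (G : AddSubgroup ℝ) (x : ℝ) (hG : Countable (ℝ ⧸ G)) :
    IsOpen[cosetTopology] {y : ℝ | y - x ∈ G} :=
  TopologicalSpace.GenerateOpen.basic _ ⟨G, x, hG, rfl⟩

lemma exists_functional (v : ℝ) (hv : v ≠ 0) : ∃ f : ℝ →ₗ[ℚ] ℚ, f v = 1 := by
  obtain ⟨g, hg⟩ :=
    LinearMap.exists_extend (LinearPMap.mkSpanSingleton (K := ℚ) v (1 : ℚ) hv).toFun
  refine ⟨g, ?_⟩
  have := congrArg (fun h => h ⟨v, Submodule.mem_span_singleton_self v⟩) hg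
  simp only [LinearMap.comp_apply, Submodule.subtype_apply] at this
  rw [this]
  exact LinearPMap.mkSpanSingleton_apply ℚ ℚ hv 1

lemma countable_quot_ker (f : ℝ →+ ℚ) : Countable (ℝ ⧸ f.ker) := by
  have e := QuotientAddGroup.quotientKerEquivRange f
  exact Countable.of_equiv _ e.toEquiv.symm

theorem stmt8 :
    @T2Space ℝ cosetTopology ∧
    @IsTopologicalAddGroup ℝ cosetTopology inferInstance ∧
    (∀ G : AddSubgroup ℝ, Countable (ℝ ⧸ G) → IsOpen[cosetTopology] (G : Set ℝ)) ∧
    ¬ Continuous[cosetTopology, inferInstance] (id : ℝ → ℝ) := by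
  refine ⟨?_, ?_, ?_, ?_⟩
  · -- T2
    letI := cosetTopology
    refine ⟨fun x y hxy => ?_⟩
    obtain ⟨f, hf⟩ := exists_functional (x - y) (sub_ne_zero.2 hxy)
    set F : ℝ →+ ℚ := f.toAddMonoidHom
    have hker : Countable (ℝ ⧸ F.ker) := countable_quot_ker F
    refine ⟨{z | z - x ∈ F.ker}, {z | z - y ∈ F.ker},
      coset_isOpen _ _ hker, coset_isOpen _ _ hker,
      by simp only [Set.mem_setOf_eq, sub_self]; exact zero_mem _,
      by simp only [Set.mem_setOf_eq, sub_self]; exact zero_mem _, ?_⟩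
    rw [Set.disjoint_left]
    rintro z hz₁ hz₂
    have hmem : x - y ∈ F.ker := by
      have h' : x - y = (z - y) - (z - x) := by ring
      rw [h']; exact sub_mem hz₂ hz₁
    rw [AddMonoidHom.mem_ker] at hmem
    have : f (x - y) = 0 := hmem
    rw [hf] at this
    exact one_ne_zero this
  · -- topological add group
    letI := cosetTopology
    have hadd : ContinuousAdd ℝ := by
      refine ⟨continuous_generateFrom_iff.2 ?_⟩
      rintro V ⟨G, x, hG, rfl⟩
      rw [isOpen_prod_iff]
      rintro a b hab
      refine ⟨{y | y - a ∈ G}, {y | y - b ∈ G}, coset_isOpen _ _ hG, coset_isOpen _ _ hG,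
        by simp only [Set.mem_setOf_eq, sub_self]; exact zero_mem _,
        by simp only [Set.mem_setOf_eq, sub_self]; exact zero_mem _, ?_⟩
      rintro ⟨p, q⟩ ⟨hp, hq⟩
      have h' : p + q - x = (p - a) + (q - b) + (a + b - x) := by ring
      simpa [Set.mem_preimage, h'] using add_mem (add_mem hp hq) hab
    have hneg : ContinuousNeg ℝ := by
      refine ⟨continuous_generateFrom_iff.2 ?_⟩
      rintro V ⟨G, x, hG, rfl⟩
      have h' : (fun y : ℝ => -y) ⁻¹' {y | y - x ∈ G} = {y | y - (-x) ∈ G} := by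
        ext y
        simp only [Set.mem_preimage, Set.mem_setOf_eq, sub_neg_eq_add]
        rw [show -y - x = -(y + x) by ring, neg_mem_iff]
      rw [h']
      exact coset_isOpen _ _ hG
    exact ⟨⟩
  · -- countable index subgroups are open
    intro G hG
    have h' : (G : Set ℝ) = {y : ℝ | y - 0 ∈ G} := by ext y; simp
    rw [h']
    exact coset_isOpen G 0 hG
  · -- not continuous
    intro hcont
    have hopen : IsOpen[cosetTopology] (Set.Ioo (-1 : ℝ) 1) := by
      have := @Continuous.isOpen_preimage ℝ ℝ cosetTopology _ id hcont
        (Set.Ioo (-1 : ℝ) 1) isOpen_Ioo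
      simpa using this
    have h0 : (0 : ℝ) ∈ Set.Ioo (-1 : ℝ) 1 := by norm_num
    obtain ⟨t, ⟨G, x, hG, rfl⟩, h0t, hts⟩ :=
      @TopologicalSpace.IsTopologicalBasis.exists_subset_of_mem_open ℝ cosetTopology
        cosetBasis cosetBasis_isBasis 0 (Set.Ioo (-1 : ℝ) 1) h0 hopen
    have hxG : -x ∈ G := by simpa using h0t
    have hGsub : (G : Set ℝ) ⊆ Set.Ioo (-1 : ℝ) 1 := by
      intro g hg
      refine hts ?_
      have h' : g - x = g + (-x) := by ring
      exact Set.mem_setOf_eq ▸ (h' ▸ add_mem hg hxG)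
    have hbot : G = ⊥ := by
      rw [eq_bot_iff]
      intro g hg
      by_contra hgne
      have hgne' : g ≠ 0 := by simpa [AddSubgroup.mem_bot] using hgne
      have hgpos : 0 < |g| := abs_pos.2 hgne'
      obtain ⟨n, hn⟩ := exists_nat_gt (1 / |g|)
      have hmem : (n • g : ℝ) ∈ G := AddSubgroup.nsmul_mem G hg n
      have hlt := hGsub hmem
      rw [Set.mem_Ioo] at hlt
      have habs : |(n • g : ℝ)| < 1 := abs_lt.2 ⟨hlt.1, hlt.2⟩
      rw [nsmul_eq_mul, abs_mul, Nat.abs_cast] at habs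
      have h1 : (1 : ℝ) < n * |g| := (div_lt_iff₀ hgpos).1 hn
      linarith
    subst hbot
    have hc : Countable ℝ :=
      Countable.of_equiv _ (QuotientAddGroup.quotientBot (G := ℝ)).toEquiv
    exact not_countable hc
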